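/- Let (Ω, F, P) be a probability space, p ≥ 1, and let β̂ : Ω → ℝ^p be a random vector. Fix β ∈ ℝ^p with null set S₀ = {j : β_j = 0}, a measurable b : Ω → ℝ^p, and a random threshold τ : Ω → (0,∞). Let G be an event on which |β̂_j| ≤ b_j for all j ∈ S₀. Then E[ #{j ∈ S₀ : |β̂_j| ≥ τ} / max(#{j : |β̂_j| ≥ τ}, 1) ] ≤ E[ #{j : b_j ≥ τ} / max(#{j : |β̂_j| ≥ τ}, 1) ] + P(Gᶜ). -/

import Mathlib

open MeasureTheory

theorem stmt15 {Ω : Type*} [MeasurableSpace Ω] (μ : Measure Ω) [IsProbabilityMeasure μ]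
    {p : ℕ} (hp : 1 ≤ p) (β : Fin p → ℝ) (βh : Ω → Fin p → ℝ)
    (b : Ω → Fin p → ℝ) (τ : Ω → ℝ) (hτpos : ∀ ω, 0 < τ ω)
    (G : Set Ω)
    (hdom : ∀ ω ∈ G, ∀ j : Fin p, β j = 0 → |βh ω j| ≤ b ω j)
    (hint1 : Integrable (fun ω =>
      (((Finset.univ.filter (fun j : Fin p => β j = 0)).filter
          (fun j => τ ω ≤ |βh ω j|)).card : ℝ) /
        max ((Finset.univ.filter (fun j : Fin p => τ ω ≤ |βh ω j|)).card : ℝ) 1) μ)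
    (hint2 : Integrable (fun ω =>
      ((Finset.univ.filter (fun j : Fin p => τ ω ≤ b ω j)).card : ℝ) /
        max ((Finset.univ.filter (fun j : Fin p => τ ω ≤ |βh ω j|)).card : ℝ) 1) μ) :
    ∫ ω, (((Finset.univ.filter (fun j : Fin p => β j = 0)).filter
          (fun j => τ ω ≤ |βh ω j|)).card : ℝ) /
        max ((Finset.univ.filter (fun j : Fin p => τ ω ≤ |βh ω j|)).card : ℝ) 1 ∂μ ≤
      (∫ ω, ((Finset.univ.filter (fun j : Fin p => τ ω ≤ b ω j)).card : ℝ) /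
        max ((Finset.univ.filter (fun j : Fin p => τ ω ≤ |βh ω j|)).card : ℝ) 1 ∂μ) +
      (μ Gᶜ).toReal := by
  set f : Ω → ℝ := fun ω =>
      (((Finset.univ.filter (fun j : Fin p => β j = 0)).filter
          (fun j => τ ω ≤ |βh ω j|)).card : ℝ) /
        max ((Finset.univ.filter (fun j : Fin p => τ ω ≤ |βh ω j|)).card : ℝ) 1 with hf
  set g : Ω → ℝ := fun ω =>
      ((Finset.univ.filter (fun j : Fin p => τ ω ≤ b ω j)).card : ℝ) /
        max ((Finset.univ.filter (fun j : Fin p => τ ω ≤ |βh ω j|)).card : ℝ) 1 with hg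
  -- pointwise bound
  have hden : ∀ ω, (0:ℝ) < max ((Finset.univ.filter (fun j : Fin p => τ ω ≤ |βh ω j|)).card : ℝ) 1 :=
    fun ω => lt_max_of_lt_right one_pos
  have hf01 : ∀ ω, f ω ∈ Set.Icc (0:ℝ) 1 := by
    intro ω
    constructor
    · exact div_nonneg (Nat.cast_nonneg _) (hden ω).le
    · rw [hf]
      apply div_le_one_of_le₀
      · refine le_trans ?_ (le_max_left _ _)
        exact_mod_cast Finset.card_le_card (Finset.filter_subset_filter _
          (Finset.filter_subset _ _)) |>.trans (le_of_eq rfl)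
      · exact (hden ω).le
  have hg0 : ∀ ω, 0 ≤ g ω := fun ω => div_nonneg (Nat.cast_nonneg _) (hden ω).le
  have hle : ∀ ω, f ω - g ω ≤ Set.indicator Gᶜ (fun _ => (1:ℝ)) ω := by
    intro ω
    by_cases hG : ω ∈ G
    · have hsub : ((Finset.univ.filter (fun j : Fin p => β j = 0)).filter
          (fun j => τ ω ≤ |βh ω j|)) ⊆ Finset.univ.filter (fun j : Fin p => τ ω ≤ b ω j) := by
        intro j hj
        simp only [Finset.mem_filter, Finset.mem_univ, true_and] at hj ⊢
        exact hj.2.trans (hdom ω hG j hj.1)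
      have : f ω ≤ g ω :=
        div_le_div_of_nonneg_right (by exact_mod_cast Finset.card_le_card hsub) (hden ω).le
      have hind : Set.indicator Gᶜ (fun _ => (1:ℝ)) ω = 0 :=
        Set.indicator_of_notMem (by simpa using hG) _
      linarith
    · have hind : Set.indicator Gᶜ (fun _ => (1:ℝ)) ω = 1 :=
        Set.indicator_of_mem (by simpa using hG) _
      have := (hf01 ω).2
      have := hg0 ω
      linarith
  have hsub : Integrable (fun ω => f ω - g ω) μ := hint1.sub hint2
  -- ∫ (f - g) ≤ μ Gᶜ
  have key : ∫ ω, (f ω - g ω) ∂μ ≤ (μ Gᶜ).toReal := by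
    have hmax : Integrable (fun ω => max (f ω - g ω) 0) μ := hsub.pos_part
    have h1 : ∫ ω, (f ω - g ω) ∂μ ≤ ∫ ω, max (f ω - g ω) 0 ∂μ :=
      integral_mono hsub hmax fun ω => le_max_left _ _
    have h2 : ∫ ω, max (f ω - g ω) 0 ∂μ
        = (∫⁻ ω, ENNReal.ofReal (max (f ω - g ω) 0) ∂μ).toReal :=
      integral_eq_lintegral_of_nonneg_ae (ae_of_all _ fun ω => le_max_right _ _)
        hmax.aestronglyMeasurable
    have h3 : ∫⁻ ω, ENNReal.ofReal (max (f ω - g ω) 0) ∂μ ≤ μ Gᶜ := by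
      refine le_trans (lintegral_mono (fun ω => ?_))
        ((lintegral_indicator_const_le Gᶜ 1).trans (by rw [one_mul]))
      by_cases hG : ω ∈ Gᶜ
      · rw [Set.indicator_of_mem hG]
        exact ENNReal.ofReal_le_of_le_toReal (by
          simp only [ENNReal.toReal_one]
          have := hle ω
          rw [Set.indicator_of_mem hG] at this
          exact max_le this zero_le_one)
      · rw [Set.indicator_of_notMem hG]
        have := hle ω
        rw [Set.indicator_of_notMem hG] at this
        simp [max_le this (le_refl 0)]
        linarith
    calc ∫ ω, (f ω - g ω) ∂μ ≤ _ := h1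
      _ = _ := h2
      _ ≤ (μ Gᶜ).toReal := ENNReal.toReal_mono (measure_ne_top _ _) h3
  have := integral_sub hint1 hint2
  simp only [hf, hg] at this key ⊢
  linarith [key, this ▸ key]
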